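/- Let $q \in (0,1)$ and $a \in (0,1)$. Define $\kappa_\mathrm{g}(\theta) = \frac{\Psi_q'(\theta - \log_q a)}{\Psi_q'(\theta + \log_q a)}$ for $\theta > \log_q a$, where $\Psi_q'(z) = (\log q)^2\sum_{k=0}^\infty \frac{q^{z+k}}{(1-q^{z+k})^2}$. Then $\theta \mapsto \kappa_\mathrm{g}(\theta)$ is strictly decreasing on $(\log_q a, \infty)$. -/

import Mathlib

open Real Set

-- strict convexity of φ(z) = z*L - 2*log(1 - exp(z*L)) on Ioi 0, L < 0
lemma phi_strictConvex {L : ℝ} (hL : L < 0) :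
    StrictConvexOn ℝ (Set.Ioi (0:ℝ))
      (fun z => z * L - 2 * Real.log (1 - Real.exp (z * L))) := by
  have he : ∀ x : ℝ, 0 < x → Real.exp (x * L) < 1 := fun x hx =>
    Real.exp_lt_one_iff.2 (mul_neg_of_pos_of_neg hx hL)
  have hpos : ∀ x : ℝ, 0 < x → 0 < 1 - Real.exp (x * L) := fun x hx => by
    have := he x hx; linarith
  set D : ℝ → ℝ := fun z => L + 2 * L * (Real.exp (z * L) / (1 - Real.exp (z * L))) with hDdef
  have hD : ∀ z ∈ Set.Ioi (0:ℝ), HasDerivAt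
      (fun z => z * L - 2 * Real.log (1 - Real.exp (z * L))) (D z) z := by
    intro z hz
    have hne : 1 - Real.exp (z * L) ≠ 0 := (hpos z hz).ne'
    have h1 : HasDerivAt (fun z : ℝ => z * L) L z := by
      simpa using (hasDerivAt_id z).mul_const L
    have h2 : HasDerivAt (fun z : ℝ => Real.exp (z * L)) (Real.exp (z * L) * L) z := h1.exp
    have h3 : HasDerivAt (fun z : ℝ => 1 - Real.exp (z * L)) (-(Real.exp (z * L) * L)) z :=
      h2.const_sub 1
    have h4 := h3.log hne
    have h5 := h1.sub (h4.const_mul 2)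
    refine h5.congr_deriv ?_
    simp only [hDdef]
    field_simp
    ring
  apply strictConvexOn_of_deriv2_pos (convex_Ioi 0)
  · apply ContinuousOn.sub (Continuous.continuousOn (by continuity))
    apply ContinuousOn.mul continuousOn_const
    apply ContinuousOn.log (Continuous.continuousOn (by continuity))
    exact fun x hx => (hpos x hx).ne'
  · intro x hx
    rw [interior_Ioi] at hx
    have hev : deriv (fun z => z * L - 2 * Real.log (1 - Real.exp (z * L))) =ᶠ[nhds x] D := by
      filter_upwards [isOpen_Ioi.mem_nhds hx] with y hy
      exact (hD y hy).deriv
    have hne : 1 - Real.exp (x * L) ≠ 0 := (hpos x hx).ne'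
    have h1 : HasDerivAt (fun z : ℝ => z * L) L x := by
      simpa using (hasDerivAt_id x).mul_const L
    have h2 : HasDerivAt (fun z : ℝ => Real.exp (z * L)) (Real.exp (x * L) * L) x := h1.exp
    have h3' : HasDerivAt (fun z : ℝ => 1 - Real.exp (z * L)) (-(Real.exp (x * L) * L)) x :=
      h2.const_sub 1
    have hdiv := h2.div h3' hne
    have hDd : HasDerivAt D (2 * L ^ 2 * (Real.exp (x * L) / (1 - Real.exp (x * L)) ^ 2)) x := by
      have := (hdiv.const_mul (2 * L)).const_add L
      refine this.congr_deriv ?_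
      field_simp
      ring
    have : (deriv^[2] (fun z => z * L - 2 * Real.log (1 - Real.exp (z * L)))) x = deriv D x := by
      simp only [Function.iterate_succ, Function.iterate_zero, Function.comp_apply, id]
      exact hev.deriv_eq
    rw [this, hDd.deriv]
    have h5 : 0 < L ^ 2 := by nlinarith
    have h6 : 0 < Real.exp (x * L) := Real.exp_pos _
    have h7 : 0 < (1 - Real.exp (x * L)) ^ 2 := by positivity
    positivity

section
variable {q : ℝ}

lemma qz_lt_one (hq0 : 0 < q) (hq1 : q < 1) {z : ℝ} (hz : 0 < z) : q ^ z < 1 :=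
  Real.rpow_lt_one hq0.le hq1 hz

lemma one_sub_qz_pos (hq0 : 0 < q) (hq1 : q < 1) {z : ℝ} (hz : 0 < z) : 0 < 1 - q ^ z := by
  have := qz_lt_one hq0 hq1 hz; linarith

-- F z = q^z/(1-q^z)^2 = exp (φ z) for z > 0
lemma F_eq (hq0 : 0 < q) (hq1 : q < 1) {z : ℝ} (hz : 0 < z) :
    q ^ z / (1 - q ^ z) ^ 2 =
      Real.exp (z * Real.log q - 2 * Real.log (1 - Real.exp (z * Real.log q))) := by
  have hqz : q ^ z = Real.exp (z * Real.log q) := by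
    rw [Real.rpow_def_of_pos hq0, mul_comm]
  have hu : 0 < 1 - q ^ z := one_sub_qz_pos hq0 hq1 hz
  rw [← hqz, Real.exp_sub, ← hqz]
  congr 1
  rw [show (2 : ℝ) * Real.log (1 - q ^ z) = Real.log (1 - q ^ z) * 2 by ring,
    Real.exp_mul, Real.exp_log hu]
  norm_num

lemma term_lt (hq0 : 0 < q) (hq1 : q < 1) {x y l m : ℝ} (hx : 0 < x) (hy : 0 < y)
    (hxy : x ≠ y) (hl : 0 < l) (hm : 0 < m) (hlm : l + m = 1) :
    q ^ (l * x + m * y) / (1 - q ^ (l * x + m * y)) ^ 2 <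
      (q ^ x / (1 - q ^ x) ^ 2) ^ l * (q ^ y / (1 - q ^ y) ^ 2) ^ m := by
  have hL : Real.log q < 0 := Real.log_neg hq0 hq1
  have hmid : 0 < l * x + m * y := by positivity
  have hconv := (phi_strictConvex hL).2 (Set.mem_Ioi.2 hx) (Set.mem_Ioi.2 hy) hxy hl hm hlm
  simp only [smul_eq_mul] at hconv
  rw [F_eq hq0 hq1 hmid, F_eq hq0 hq1 hx, F_eq hq0 hq1 hy]
  rw [← Real.exp_mul, ← Real.exp_mul, ← Real.exp_add]
  exact Real.exp_lt_exp.2 (by linarith [hconv])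
end
section
variable {q : ℝ}

lemma g_pos (hq0 : 0 < q) (hq1 : q < 1) {z : ℝ} (hz : 0 < z) (k : ℕ) :
    0 < q ^ (z + (k : ℝ)) / (1 - q ^ (z + (k : ℝ))) ^ 2 := by
  have hzk : 0 < z + (k : ℝ) := by positivity
  have h1 : 0 < q ^ (z + (k : ℝ)) := Real.rpow_pos_of_pos hq0 _
  have h2 : 0 < 1 - q ^ (z + (k : ℝ)) := one_sub_qz_pos hq0 hq1 hzk
  positivity

lemma summable_g (hq0 : 0 < q) (hq1 : q < 1) {z : ℝ} (hz : 0 < z) :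
    Summable (fun k : ℕ => q ^ (z + (k : ℝ)) / (1 - q ^ (z + (k : ℝ))) ^ 2) := by
  have hzpos := one_sub_qz_pos hq0 hq1 hz
  have hbound : ∀ k : ℕ, q ^ (z + (k : ℝ)) / (1 - q ^ (z + (k : ℝ))) ^ 2 ≤
      (q ^ z / (1 - q ^ z) ^ 2) * q ^ k := by
    intro k
    have hzk : 0 < z + (k : ℝ) := by positivity
    have h2 : 0 < 1 - q ^ (z + (k : ℝ)) := one_sub_qz_pos hq0 hq1 hzk
    have hle : q ^ (z + (k : ℝ)) ≤ q ^ z :=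
      Real.rpow_le_rpow_of_exponent_ge hq0 hq1.le (by linarith [Nat.cast_nonneg (α := ℝ) k])
    have hsplit : q ^ (z + (k : ℝ)) = q ^ z * q ^ k := by
      rw [Real.rpow_add hq0, Real.rpow_natCast]
    calc q ^ (z + (k : ℝ)) / (1 - q ^ (z + (k : ℝ))) ^ 2
        ≤ q ^ (z + (k : ℝ)) / (1 - q ^ z) ^ 2 := by
          gcongr
      _ = (q ^ z / (1 - q ^ z) ^ 2) * q ^ k := by rw [hsplit]; ring
  exact Summable.of_nonneg_of_le (fun k => (g_pos hq0 hq1 hz k).le) hbound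
    ((summable_geometric_of_lt_one hq0.le hq1).mul_left _)

lemma S_pos (hq0 : 0 < q) (hq1 : q < 1) {z : ℝ} (hz : 0 < z) :
    0 < ∑' k : ℕ, q ^ (z + (k : ℝ)) / (1 - q ^ (z + (k : ℝ))) ^ 2 :=
  Summable.tsum_pos (summable_g hq0 hq1 hz) (fun k => (g_pos hq0 hq1 hz k).le) 0 (g_pos hq0 hq1 hz 0)

end

lemma holder_tsum {a b : ℕ → ℝ} (ha : Summable a) (hb : Summable b)
    (ha0 : ∀ k, 0 ≤ a k) (hb0 : ∀ k, 0 ≤ b k) (hA : 0 < ∑' k, a k) (hB : 0 < ∑' k, b k)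
    {l m : ℝ} (hl : 0 ≤ l) (hm : 0 ≤ m) (hlm : l + m = 1) :
    ∑' k, (a k) ^ l * (b k) ^ m ≤ (∑' k, a k) ^ l * (∑' k, b k) ^ m := by
  set A := ∑' k, a k with hAdef
  set B := ∑' k, b k with hBdef
  have hAl : 0 < A ^ l := Real.rpow_pos_of_pos hA l
  have hBm : 0 < B ^ m := Real.rpow_pos_of_pos hB m
  have key : ∀ k, a k ^ l * b k ^ m ≤ A ^ l * B ^ m * (l * (a k / A) + m * (b k / B)) := by
    intro k
    have h1 : (a k / A) ^ l * (b k / B) ^ m ≤ l * (a k / A) + m * (b k / B) :=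
      Real.geom_mean_le_arith_mean2_weighted hl hm (div_nonneg (ha0 k) hA.le) (div_nonneg (hb0 k) hB.le) hlm
    have e1 : a k ^ l * b k ^ m = (A ^ l * B ^ m) * ((a k / A) ^ l * (b k / B) ^ m) := by
      rw [Real.div_rpow (ha0 k) hA.le, Real.div_rpow (hb0 k) hB.le]
      field_simp
    rw [e1]
    exact mul_le_mul_of_nonneg_left h1 (by positivity)
  have hsum_rhs : Summable (fun k => A ^ l * B ^ m * (l * (a k / A) + m * (b k / B))) := by
    apply Summable.mul_left
    exact (((ha.div_const A).mul_left l).add ((hb.div_const B).mul_left m))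
  have hsum_lhs : Summable (fun k => a k ^ l * b k ^ m) :=
    Summable.of_nonneg_of_le (fun k => mul_nonneg (Real.rpow_nonneg (ha0 k) _) (Real.rpow_nonneg (hb0 k) _)) key hsum_rhs
  calc ∑' k, a k ^ l * b k ^ m
      ≤ ∑' k, A ^ l * B ^ m * (l * (a k / A) + m * (b k / B)) :=
        Summable.tsum_le_tsum key hsum_lhs hsum_rhs
    _ = A ^ l * B ^ m := by
        rw [tsum_mul_left]
        rw [Summable.tsum_add (((ha.div_const A).mul_left l)) (((hb.div_const B).mul_left m))]
        rw [tsum_mul_left, tsum_mul_left, tsum_div_const, tsum_div_const]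
        rw [← hAdef, ← hBdef]
        rw [div_self hA.ne', div_self hB.ne', mul_one, mul_one, hlm, mul_one]

noncomputable def PsiPrime (q z : ℝ) : ℝ :=
  (Real.log q) ^ 2 * ∑' k : ℕ, q ^ (z + (k : ℝ)) / (1 - q ^ (z + (k : ℝ))) ^ 2

lemma key_ineq {q : ℝ} (hq0 : 0 < q) (hq1 : q < 1) {u₁ v₁ u₂ v₂ : ℝ}
    (hu₁ : 0 < u₁) (h1 : u₁ < u₂) (h2 : u₂ < v₁) (h3 : v₂ < v₁)
    (hv₂ : 0 < v₂) (hsum : u₁ + v₁ = u₂ + v₂) :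
    PsiPrime q u₂ * PsiPrime q v₂ < PsiPrime q u₁ * PsiPrime q v₁ := by
  have hu₂ : 0 < u₂ := hu₁.trans h1
  have hv₁ : 0 < v₁ := hu₂.trans h2
  set l := (v₁ - u₂) / (v₁ - u₁) with hldef
  set m := (u₂ - u₁) / (v₁ - u₁) with hmdef
  have hden : 0 < v₁ - u₁ := by linarith
  have hl : 0 < l := div_pos (by linarith) hden
  have hm : 0 < m := div_pos (by linarith) hden
  have hlm : l + m = 1 := by rw [hldef, hmdef]; field_simp; try ring
  have hmix1 : l * u₁ + m * v₁ = u₂ := by rw [hldef, hmdef]; field_simp; try ring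
  have hmix2 : m * u₁ + l * v₁ = v₂ := by
    rw [hldef, hmdef]; field_simp
    linear_combination (v₁ - u₁) * hsum
  have ha := summable_g hq0 hq1 hu₁
  have hb := summable_g hq0 hq1 hv₁
  have hA := S_pos hq0 hq1 hu₁
  have hB := S_pos hq0 hq1 hv₁
  set a : ℕ → ℝ := fun k => q ^ (u₁ + (k : ℝ)) / (1 - q ^ (u₁ + (k : ℝ))) ^ 2 with hadef
  set b : ℕ → ℝ := fun k => q ^ (v₁ + (k : ℝ)) / (1 - q ^ (v₁ + (k : ℝ))) ^ 2 with hbdef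
  have ha0 : ∀ k, 0 ≤ a k := fun k => (g_pos hq0 hq1 hu₁ k).le
  have hb0 : ∀ k, 0 ≤ b k := fun k => (g_pos hq0 hq1 hv₁ k).le
  have hterm1 : ∀ k : ℕ, q ^ (u₂ + (k : ℝ)) / (1 - q ^ (u₂ + (k : ℝ))) ^ 2 <
      a k ^ l * b k ^ m := by
    intro k
    have h := term_lt hq0 hq1 (x := u₁ + (k : ℝ)) (y := v₁ + (k : ℝ))
      (by positivity) (by positivity) (by intro h; exact absurd h (by simp; linarith)) hl hm hlm
    rwa [show l * (u₁ + (k : ℝ)) + m * (v₁ + (k : ℝ)) = u₂ + (k : ℝ) from by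
      linear_combination hmix1 + (k : ℝ) * hlm] at h
  have hterm2 : ∀ k : ℕ, q ^ (v₂ + (k : ℝ)) / (1 - q ^ (v₂ + (k : ℝ))) ^ 2 <
      a k ^ m * b k ^ l := by
    intro k
    have h := term_lt hq0 hq1 (x := u₁ + (k : ℝ)) (y := v₁ + (k : ℝ))
      (by positivity) (by positivity) (by intro h; exact absurd h (by simp; linarith)) hm hl
      (by linarith)
    rwa [show m * (u₁ + (k : ℝ)) + l * (v₁ + (k : ℝ)) = v₂ + (k : ℝ) from by
      linear_combination hmix2 + (k : ℝ) * hlm] at h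
  have hmid1_sum : Summable (fun k => a k ^ l * b k ^ m) := by
    apply Summable.of_nonneg_of_le
      (fun k => mul_nonneg (Real.rpow_nonneg (ha0 k) _) (Real.rpow_nonneg (hb0 k) _))
      (fun k => Real.geom_mean_le_arith_mean2_weighted hl.le hm.le (ha0 k) (hb0 k) hlm)
      ((ha.mul_left l).add (hb.mul_left m))
  have hmid2_sum : Summable (fun k => a k ^ m * b k ^ l) := by
    apply Summable.of_nonneg_of_le
      (fun k => mul_nonneg (Real.rpow_nonneg (ha0 k) _) (Real.rpow_nonneg (hb0 k) _))
      (fun k => Real.geom_mean_le_arith_mean2_weighted hm.le hl.le (ha0 k) (hb0 k) (by linarith))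
      ((ha.mul_left m).add (hb.mul_left l))
  set A := ∑' k : ℕ, a k with hAdef
  set B := ∑' k : ℕ, b k with hBdef
  have hS1 : (∑' k : ℕ, q ^ (u₂ + (k : ℝ)) / (1 - q ^ (u₂ + (k : ℝ))) ^ 2) < A ^ l * B ^ m := by
    calc (∑' k : ℕ, q ^ (u₂ + (k : ℝ)) / (1 - q ^ (u₂ + (k : ℝ))) ^ 2)
        < ∑' k : ℕ, a k ^ l * b k ^ m :=
          Summable.tsum_lt_tsum (fun k => (hterm1 k).le) (hterm1 0) (summable_g hq0 hq1 hu₂) hmid1_sum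
      _ ≤ A ^ l * B ^ m := holder_tsum ha hb ha0 hb0 hA hB hl.le hm.le hlm
  have hS2 : (∑' k : ℕ, q ^ (v₂ + (k : ℝ)) / (1 - q ^ (v₂ + (k : ℝ))) ^ 2) < A ^ m * B ^ l := by
    calc (∑' k : ℕ, q ^ (v₂ + (k : ℝ)) / (1 - q ^ (v₂ + (k : ℝ))) ^ 2)
        < ∑' k : ℕ, a k ^ m * b k ^ l :=
          Summable.tsum_lt_tsum (fun k => (hterm2 k).le) (hterm2 0) (summable_g hq0 hq1 hv₂) hmid2_sum
      _ ≤ A ^ m * B ^ l := holder_tsum ha hb ha0 hb0 hA hB hm.le hl.le (by linarith)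
  have hfinal : (∑' k : ℕ, q ^ (u₂ + (k : ℝ)) / (1 - q ^ (u₂ + (k : ℝ))) ^ 2) *
      (∑' k : ℕ, q ^ (v₂ + (k : ℝ)) / (1 - q ^ (v₂ + (k : ℝ))) ^ 2) < A * B := by
    have h := mul_lt_mul'' hS1 hS2 (S_pos hq0 hq1 hu₂).le (S_pos hq0 hq1 hv₂).le
    calc _ < A ^ l * B ^ m * (A ^ m * B ^ l) := h
      _ = A ^ (l + m) * B ^ (l + m) := by
          rw [Real.rpow_add hA, Real.rpow_add hB]; ring
      _ = A * B := by rw [hlm, Real.rpow_one, Real.rpow_one]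
  have hC : 0 < (Real.log q) ^ 2 := by
    have h := (Real.log_neg hq0 hq1).ne
    positivity
  unfold PsiPrime
  calc ((Real.log q) ^ 2 * ∑' k : ℕ, q ^ (u₂ + (k : ℝ)) / (1 - q ^ (u₂ + (k : ℝ))) ^ 2) *
        ((Real.log q) ^ 2 * ∑' k : ℕ, q ^ (v₂ + (k : ℝ)) / (1 - q ^ (v₂ + (k : ℝ))) ^ 2)
      = (Real.log q) ^ 2 * (Real.log q) ^ 2 *
        ((∑' k : ℕ, q ^ (u₂ + (k : ℝ)) / (1 - q ^ (u₂ + (k : ℝ))) ^ 2) *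
         (∑' k : ℕ, q ^ (v₂ + (k : ℝ)) / (1 - q ^ (v₂ + (k : ℝ))) ^ 2)) := by ring
    _ < (Real.log q) ^ 2 * (Real.log q) ^ 2 * (A * B) :=
        mul_lt_mul_of_pos_left hfinal (mul_pos hC hC)
    _ = ((Real.log q) ^ 2 * A) * ((Real.log q) ^ 2 * B) := by ring

theorem stmt_9 (q a : ℝ) (hq0 : 0 < q) (hq1 : q < 1) (ha0 : 0 < a) (ha1 : a < 1) :
    StrictAntiOn (fun θ : ℝ =>
      PsiPrime q (θ - Real.log a / Real.log q) / PsiPrime q (θ + Real.log a / Real.log q))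
      (Set.Ioi (Real.log a / Real.log q)) := by
  intro θ₁ hθ₁ θ₂ hθ₂ h12
  set c := Real.log a / Real.log q with hc
  have hLq : Real.log q < 0 := Real.log_neg hq0 hq1
  have hLa : Real.log a < 0 := Real.log_neg ha0 ha1
  have hcpos : 0 < c := div_pos_of_neg_of_neg hLa hLq
  simp only [Set.mem_Ioi] at hθ₁ hθ₂
  have p1 : 0 < θ₁ - c := by linarith
  have p2 : 0 < θ₂ - c := by linarith
  have p3 : 0 < θ₁ + c := by linarith
  have p4 : 0 < θ₂ + c := by linarith
  have hC : 0 < (Real.log q) ^ 2 := by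
    have h := hLq.ne
    positivity
  have hpsi : ∀ z : ℝ, 0 < z → 0 < PsiPrime q z := fun z hz =>
    mul_pos hC (S_pos hq0 hq1 hz)
  have key := key_ineq hq0 hq1 (u₁ := θ₁ - c) (v₁ := θ₂ + c) (u₂ := θ₂ - c) (v₂ := θ₁ + c)
    p1 (by linarith) (by linarith) (by linarith) p3 (by ring)
  show PsiPrime q (θ₂ - c) / PsiPrime q (θ₂ + c) < PsiPrime q (θ₁ - c) / PsiPrime q (θ₁ + c)
  rw [div_lt_div_iff₀ (hpsi _ p4) (hpsi _ p3)]
  linarith [key]
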